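/- Let m, n ≥ 1 with gcd(m,n) = 1, and let ℓ ≥ 0, with sequences j₀,…,j_ℓ and j'₀,…,j'_ℓ of natural numbers satisfying 0 ≤ jᵢ < n and 0 ≤ j'ᵢ < n for all i < ℓ. If j₀·m^ℓ + n·j₁·m^(ℓ-1) + ⋯ + n^(ℓ-1)·j_{ℓ-1}·m + n^ℓ·j_ℓ = j'₀·m^ℓ + n·j'₁·m^(ℓ-1) + ⋯ + n^(ℓ-1)·j'_{ℓ-1}·m + n^ℓ·j'_ℓ, then jᵢ = j'ᵢ for all i = 0, …, ℓ. -/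
import Mathlib


theorem stmt_3 (m n : ℕ) (hm : 1 ≤ m) (hn : 1 ≤ n) (hmn : Nat.gcd m n = 1)
    (ℓ : ℕ) (j j' : Fin (ℓ + 1) → ℕ)
    (hj : ∀ i : Fin (ℓ + 1), (i : ℕ) < ℓ → j i < n)
    (hj' : ∀ i : Fin (ℓ + 1), (i : ℕ) < ℓ → j' i < n)
    (hsum : ∑ i : Fin (ℓ + 1), n ^ (i : ℕ) * j i * m ^ (ℓ - (i : ℕ)) =
      ∑ i : Fin (ℓ + 1), n ^ (i : ℕ) * j' i * m ^ (ℓ - (i : ℕ))) :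
    ∀ i : Fin (ℓ + 1), j i = j' i := by
  induction ℓ with
  | zero =>
    simp [Fin.sum_univ_one] at hsum
    intro i
    fin_cases i
    simpa using hsum
  | succ ℓ ih =>
    have key : ∀ (f : Fin (ℓ + 2) → ℕ),
        ∑ i : Fin (ℓ + 2), n ^ (i : ℕ) * f i * m ^ (ℓ + 1 - (i : ℕ)) =
        f 0 * m ^ (ℓ + 1) +
          n * ∑ i : Fin (ℓ + 1), n ^ (i : ℕ) * f i.succ * m ^ (ℓ - (i : ℕ)) := by
      intro f
      rw [Fin.sum_univ_succ, Finset.mul_sum]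
      congr 1
      · simp
      · refine Finset.sum_congr rfl fun i _ => ?_
        rw [Fin.val_succ, Nat.succ_sub_succ, pow_succ]
        ring
    rw [key, key] at hsum
    -- congruence mod n
    have hcop : Nat.gcd n (m ^ (ℓ + 1)) = 1 :=
      Nat.Coprime.pow_right _ (Nat.Coprime.symm hmn)
    have hmod : j 0 * m ^ (ℓ + 1) ≡ j' 0 * m ^ (ℓ + 1) [MOD n] := by
      have h := congrArg (· % n) hsum
      simpa [Nat.ModEq, Nat.add_mul_mod_self_left] using h
    have h0 : j 0 = j' 0 := by
      have := (Nat.ModEq.cancel_right_of_coprime hcop hmod)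
      have hjb : j 0 < n := hj 0 (by simp)
      have hjb' : j' 0 < n := hj' 0 (by simp)
      calc j 0 = j 0 % n := (Nat.mod_eq_of_lt hjb).symm
        _ = j' 0 % n := this
        _ = j' 0 := Nat.mod_eq_of_lt hjb'
    have hrest : ∑ i : Fin (ℓ + 1), n ^ (i : ℕ) * j i.succ * m ^ (ℓ - (i : ℕ)) =
        ∑ i : Fin (ℓ + 1), n ^ (i : ℕ) * j' i.succ * m ^ (ℓ - (i : ℕ)) := by
      rw [h0] at hsum
      have := Nat.add_left_cancel hsum
      exact Nat.eq_of_mul_eq_mul_left hn this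
    have htail := ih (fun i => j i.succ) (fun i => j' i.succ)
      (fun i hi => hj i.succ (by simpa using Nat.succ_lt_succ hi))
      (fun i hi => hj' i.succ (by simpa using Nat.succ_lt_succ hi))
      hrest
    intro i
    rcases Fin.eq_zero_or_eq_succ i with rfl | ⟨k, rfl⟩
    · exact h0
    · exact htail k
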